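/- The De Morgan algebra of monotone Boolean functions in doubled variables is free: let n : ℕ and let M be the lattice of monotone functions f : ((Fin n → Bool) × (Fin n → Bool)) →o Bool with the pointwise order. Define ∼ : M → M by (∼f)(x, y) := !(f (fun i => !(y i), fun i => !(x i))). Then (a) ∼f is again monotone, and ∼ is an involutive antitone map on M (so M is a De Morgan algebra); and (b) M is free on the n generators e i := (fun (x,y) => x i), whose involutes are ∼(e i) = (fun (x,y) => y i): for every distributive lattice L that is a bounded order, every antitone involution ν : L → L (ν ∘ ν = id), and every g : Fin n → L, there exists a unique bounded lattice homomorphism h : M → L satisfying h (∼f) = ν (h f) for all f ∈ M and h (e i) = g i for all i : Fin n. -/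

import Mathlib

namespace Stmt5

/-- The doubled Boolean `n`-cube `2^n × 2^n` (variables and their formal
negations), with the product/pointwise order. -/
abbrev DCube (n : ℕ) := (Fin n → Bool) × (Fin n → Bool)

/-- The lattice `M` of monotone Boolean functions on the doubled `n`-cube. -/
abbrev DM (n : ℕ) := DCube n →o Bool

/-- The De Morgan involution on monotone functions in doubled variables:
`(∼f)(x, y) = !(f (!y, !x))`. -/
def dmNeg {n : ℕ} (f : DM n) : DM n where
  toFun p := !(f (fun i => !(p.2 i), fun i => !(p.1 i)))
  monotone' := by
    have hnot : ∀ a b : Bool, a ≤ b → (!b) ≤ (!a) := by decide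
    intro p q hpq
    exact hnot _ _ (f.monotone
      ⟨fun i => hnot _ _ (hpq.2 i), fun i => hnot _ _ (hpq.1 i)⟩)

/-- The generator `e i = (x, y) ↦ x i`. -/
def eGen {n : ℕ} (i : Fin n) : DM n :=
  ⟨fun p => p.1 i, fun _ _ h => h.1 i⟩

/-- The involute of the generator `e i`, namely `(x, y) ↦ y i`. -/
def eGen' {n : ℕ} (i : Fin n) : DM n :=
  ⟨fun p => p.2 i, fun _ _ h => h.2 i⟩

noncomputable instance (n : ℕ) : BoundedOrder (DM n) :=
  { (inferInstance : OrderTop (DM n)), (inferInstance : OrderBot (DM n)) with }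

open Finset

variable {n : ℕ}

lemma eGen_apply {n : ℕ} (i : Fin n) (p : DCube n) : eGen i p = p.1 i := rfl

lemma eGen'_apply {n : ℕ} (i : Fin n) (p : DCube n) : eGen' i p = p.2 i := rfl

def litDM {n : ℕ} : Fin n ⊕ Fin n → DM n := Sum.elim eGen eGen'

def litSet (p : DCube n) : Finset (Fin n ⊕ Fin n) :=
  Finset.univ.filter (fun ℓ => Sum.elim p.1 p.2 ℓ = true)

lemma bool_inf_true (a b : Bool) : a ⊓ b = true ↔ a = true ∧ b = true := by cases a <;> cases b <;> decide

lemma bool_sup_true (a b : Bool) : a ⊔ b = true ↔ a = true ∨ b = true := by cases a <;> cases b <;> decide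

lemma DM_bot_apply (p : DCube n) : (⊥ : DM n) p = false := rfl

lemma DM_top_apply (p : DCube n) : (⊤ : DM n) p = true := rfl

lemma DM_sup_apply (f f' : DM n) (p : DCube n) : (f ⊔ f') p = f p ⊔ f' p := rfl

lemma DM_inf_apply (f f' : DM n) (p : DCube n) : (f ⊓ f') p = f p ⊓ f' p := rfl

lemma mem_litSet {p : DCube n} {ℓ} : ℓ ∈ litSet p ↔ Sum.elim p.1 p.2 ℓ = true := by
  simp [litSet]

noncomputable def monDM (p : DCube n) : DM n := (litSet p).inf litDM

lemma supDM_apply {ι : Type*} (s : Finset ι) (F : ι → DM n) (q : DCube n) :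
    s.sup F q = s.sup (fun i => F i q) :=
  Finset.comp_sup_eq_sup_comp (fun h : DM n => h q) (fun _ _ => rfl) rfl

lemma infDM_apply {ι : Type*} (s : Finset ι) (F : ι → DM n) (q : DCube n) :
    s.inf F q = s.inf (fun i => F i q) :=
  Finset.comp_inf_eq_inf_comp (fun h : DM n => h q) (fun _ _ => rfl) rfl

lemma bsup_true {ι : Type*} (s : Finset ι) (f : ι → Bool) :
    s.sup f = true ↔ ∃ i ∈ s, f i = true := by
  classical
  induction s using Finset.induction with
  | empty => simp
  | insert h ih => simp_all [Bool.or_eq_true]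

lemma binf_true {ι : Type*} (s : Finset ι) (f : ι → Bool) :
    s.inf f = true ↔ ∀ i ∈ s, f i = true := by
  have := Finset.inf_eq_top_iff f s
  simpa using this

lemma monDM_apply_true {p q : DCube n} : monDM p q = true ↔ p ≤ q := by
  rw [monDM, infDM_apply, binf_true]
  constructor
  · intro h
    constructor
    · intro i hi
      have := h (Sum.inl i) (mem_litSet.2 (by simpa using hi))
      simpa [litDM, eGen_apply] using this
    · intro i hi
      have := h (Sum.inr i) (mem_litSet.2 (by simpa using hi))
      simpa [litDM, eGen'_apply] using this
  · intro h ℓ hℓ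
    rcases ℓ with i | i
    · have hp : p.1 i = true := by simpa using mem_litSet.1 hℓ
      have h2 : true ≤ q.1 i := hp ▸ h.1 i
      revert h2; cases hq : q.1 i <;> simp [litDM, eGen_apply, hq]
    · have hp : p.2 i = true := by simpa using mem_litSet.1 hℓ
      have h2 : true ≤ q.2 i := hp ▸ h.2 i
      revert h2; cases hq : q.2 i <;> simp [litDM, eGen'_apply, hq]

/-- Disjunctive normal form. -/
lemma dnf (f : DM n) :
    f = (Finset.univ.filter (fun p : DCube n => f p = true)).sup monDM := by
  ext q
  rw [supDM_apply]
  by_cases hq : f q = true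
  · rw [hq, eq_comm, bsup_true]
    exact ⟨q, by simpa using hq, monDM_apply_true.2 le_rfl⟩
  · rw [Bool.not_eq_true] at hq
    rw [hq, eq_comm]
    rw [← Bool.not_eq_true, bsup_true]
    rintro ⟨p, hp, hpq⟩
    simp only [mem_filter] at hp
    have := f.monotone (monDM_apply_true.1 hpq)
    rw [hp.2, hq] at this
    exact absurd this (by simp)


def sigma (q : DCube n) : DCube n := (fun i => !(q.2 i), fun i => !(q.1 i))

lemma dmNeg_apply (f : DM n) (q : DCube n) : dmNeg f q = !(f (sigma q)) := rfl

lemma dmNeg_eGen (i : Fin n) : dmNeg (eGen i) = eGen' i := by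
  ext p; simp [dmNeg_apply, eGen_apply, eGen'_apply, sigma]

section Hom

variable {L : Type*} [DistribLattice L] [BoundedOrder L]
variable (ν : L → L) (g : Fin n → L)

def lit : Fin n ⊕ Fin n → L := Sum.elim g (ν ∘ g)

noncomputable def monL (p : DCube n) : L := (litSet p).inf (lit ν g)

noncomputable def hFun (f : DM n) : L :=
  (Finset.univ.filter (fun p : DCube n => f p = true)).sup (monL ν g)

variable {ν}

lemma nunu (hνν : ν ∘ ν = id) (a : L) : ν (ν a) = a := congrFun hνν a

lemma nu_sup (hν : Antitone ν) (hνν : ν ∘ ν = id) (a b : L) :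
    ν (a ⊔ b) = ν a ⊓ ν b := by
  refine le_antisymm (le_inf (hν le_sup_left) (hν le_sup_right)) ?_
  have ha := hν (inf_le_left : ν a ⊓ ν b ≤ ν a)
  have hb := hν (inf_le_right : ν a ⊓ ν b ≤ ν b)
  rw [nunu hνν] at ha
  rw [nunu hνν] at hb
  have h1 : a ⊔ b ≤ ν (ν a ⊓ ν b) := sup_le ha hb
  have := hν h1
  rwa [nunu hνν] at this

lemma nu_inf (hν : Antitone ν) (hνν : ν ∘ ν = id) (a b : L) :
    ν (a ⊓ b) = ν a ⊔ ν b := by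
  have := nu_sup hν hνν (ν a) (ν b)
  rw [nunu hνν, nunu hνν] at this
  rw [← this, nunu hνν]

lemma nu_bot (hν : Antitone ν) (hνν : ν ∘ ν = id) : ν (⊥ : L) = ⊤ := by
  refine le_antisymm le_top ?_
  have := hν (bot_le : (⊥ : L) ≤ ν ⊤)
  rwa [nunu hνν] at this

lemma nu_top (hν : Antitone ν) (hνν : ν ∘ ν = id) : ν (⊤ : L) = ⊥ := by
  refine le_antisymm ?_ bot_le
  have := hν (le_top : ν ⊥ ≤ (⊤ : L))
  rwa [nunu hνν] at this

lemma nu_finsup (hν : Antitone ν) (hνν : ν ∘ ν = id) {ι : Type*} (s : Finset ι) (f : ι → L) :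
    ν (s.sup f) = s.inf (fun i => ν (f i)) := by
  classical
  induction s using Finset.induction with
  | empty => simpa using nu_bot hν hνν
  | insert _ _ _ ih => rw [Finset.sup_insert, Finset.inf_insert, nu_sup hν hνν, ih]

lemma nu_fininf (hν : Antitone ν) (hνν : ν ∘ ν = id) {ι : Type*} (s : Finset ι) (f : ι → L) :
    ν (s.inf f) = s.sup (fun i => ν (f i)) := by
  classical
  induction s using Finset.induction with
  | empty => simpa using nu_top hν hνν
  | insert _ _ _ ih => rw [Finset.inf_insert, Finset.sup_insert, nu_inf hν hνν, ih]

lemma nu_lit (hνν : ν ∘ ν = id) (ℓ : Fin n ⊕ Fin n) :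
    ν (lit ν g ℓ) = lit ν g ℓ.swap := by
  rcases ℓ with i | i
  · rfl
  · simpa [lit] using nunu hνν (g i)

variable (ν)

lemma hFun_bot : hFun ν g (⊥ : DM n) = ⊥ := by
  have : (Finset.univ.filter (fun p : DCube n => (⊥ : DM n) p = true)) = ∅ := by
    refine Finset.filter_eq_empty_iff.2 ?_
    intro p _
    simp [DM_bot_apply]
  rw [hFun, this, Finset.sup_empty]

lemma hFun_top : hFun ν g (⊤ : DM n) = ⊤ := by
  refine le_antisymm le_top ?_
  set p0 : DCube n := (fun _ => false, fun _ => false) with hp0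
  have h1 : p0 ∈ Finset.univ.filter (fun p : DCube n => (⊤ : DM n) p = true) := by
    simp [DM_top_apply]
  have h2 : monL ν g p0 = ⊤ := by
    have : litSet p0 = ∅ := by
      refine Finset.filter_eq_empty_iff.2 ?_
      rintro (i | i) _ <;> simp [hp0]
    rw [monL, this, Finset.inf_empty]
  calc (⊤ : L) = monL ν g p0 := h2.symm
    _ ≤ _ := Finset.le_sup h1

lemma hFun_sup (f f' : DM n) : hFun ν g (f ⊔ f') = hFun ν g f ⊔ hFun ν g f' := by
  have : (Finset.univ.filter (fun p : DCube n => (f ⊔ f') p = true))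
      = (Finset.univ.filter (fun p : DCube n => f p = true))
        ∪ (Finset.univ.filter (fun p : DCube n => f' p = true)) := by
    ext p
    simp [DM_sup_apply, bool_sup_true]
  rw [hFun, this, Finset.sup_union, hFun, hFun]

lemma litSet_sup (p q : DCube n) : litSet (p ⊔ q) = litSet p ∪ litSet q := by
  ext ℓ
  rcases ℓ with i | i <;> simp [litSet, Bool.or_eq_true]

lemma hFun_inf (f f' : DM n) : hFun ν g (f ⊓ f') = hFun ν g f ⊓ hFun ν g f' := by
  refine le_antisymm ?_ ?_
  · refine le_inf ?_ ?_ <;>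
    · refine Finset.sup_le fun p hp => ?_
      simp only [Finset.mem_filter, DM_inf_apply, bool_inf_true] at hp
      exact Finset.le_sup (by simp [hp.2.1, hp.2.2])
  · rw [hFun, hFun, Finset.sup_inf_sup]
    refine Finset.sup_le ?_
    rintro ⟨p, q⟩ hpq
    simp only [Finset.mem_product, Finset.mem_filter] at hpq
    have hmem : p ⊔ q ∈ Finset.univ.filter (fun r : DCube n => (f ⊓ f') r = true) := by
      have h1 : f (p ⊔ q) = true := by
        have := f.monotone (le_sup_left : p ≤ p ⊔ q)
        rw [hpq.1.2] at this
        exact le_antisymm (by simp) this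
      have h2 : f' (p ⊔ q) = true := by
        have := f'.monotone (le_sup_right : q ≤ p ⊔ q)
        rw [hpq.2.2] at this
        exact le_antisymm (by simp) this
      simp [DM_inf_apply, bool_inf_true, h1, h2]
    have : monL ν g p ⊓ monL ν g q = monL ν g (p ⊔ q) := by
      rw [monL, monL, monL, litSet_sup, Finset.inf_union]
    rw [this]
    exact Finset.le_sup hmem

lemma hFun_eGen (i : Fin n) : hFun ν g (eGen i) = g i := by
  refine le_antisymm ?_ ?_
  · refine Finset.sup_le fun p hp => ?_
    simp only [Finset.mem_filter] at hp
    have : Sum.inl i ∈ litSet p := mem_litSet.2 (by simpa [eGen_apply] using hp.2)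
    simpa [lit, monL] using Finset.inf_le this (f := lit ν g)
  · classical
    set p0 : DCube n := (fun j => decide (j = i), fun _ => false) with hp0
    have h1 : p0 ∈ Finset.univ.filter (fun p : DCube n => eGen i p = true) := by
      exact Finset.mem_filter.2 ⟨Finset.mem_univ _, by simp [eGen_apply, hp0]⟩
    have h2 : litSet p0 = {Sum.inl i} := by
      ext ℓ
      rcases ℓ with j | j <;> simp [litSet, hp0]
    have h3 : monL ν g p0 = g i := by
      rw [monL, h2, Finset.inf_singleton]; rfl
    exact h3 ▸ Finset.le_sup h1


set_option maxHeartbeats 1000000 in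
lemma hFun_dmNeg (hν : Antitone ν) (hνν : ν ∘ ν = id) (f : DM n) :
    hFun ν g (dmNeg f) = ν (hFun ν g f) := by
  classical
  set S := Finset.univ.filter (fun p : DCube n => f p = true) with hS
  have hrhs : ν (hFun ν g f) = S.inf (fun p => (litSet p).sup (fun ℓ => lit ν g ℓ.swap)) := by
    rw [hFun, nu_finsup hν hνν]
    refine Finset.inf_congr rfl fun p _ => ?_
    rw [monL, nu_fininf hν hνν]
    exact Finset.sup_congr rfl fun ℓ _ => nu_lit g hνν ℓ
  rw [hrhs]
  refine le_antisymm ?_ ?_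
  · refine Finset.le_inf fun p hp => ?_
    refine Finset.sup_le fun q hq => ?_
    simp only [hS, Finset.mem_filter] at hp hq
    have hfp : f p = true := hp.2
    have hfq : f (sigma q) = false := by
      have h := hq.2
      rw [dmNeg_apply] at h
      simpa using h
    have hnle : ¬ p ≤ sigma q := by
      intro hle
      have h := f.monotone hle
      rw [hfp, hfq] at h
      exact absurd h (by decide)
    have hex : ∃ i, (p.1 i = true ∧ q.2 i = true) ∨ (p.2 i = true ∧ q.1 i = true) := by
      by_contra hcon
      push_neg at hcon
      apply hnle
      constructor
      · intro i
        have h := hcon i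
        show p.1 i ≤ !(q.2 i)
        cases h1 : p.1 i <;> cases h2 : q.2 i <;> simp_all
      · intro i
        have h := hcon i
        show p.2 i ≤ !(q.1 i)
        cases h1 : p.2 i <;> cases h2 : q.1 i <;> simp_all
    obtain ⟨i, hi | hi⟩ := hex
    · have hm1 : (Sum.inr i : Fin n ⊕ Fin n) ∈ litSet q := mem_litSet.2 (by simpa using hi.2)
      have h1 : monL ν g q ≤ lit ν g (Sum.inr i) := Finset.inf_le hm1
      have hm2 : (Sum.inl i : Fin n ⊕ Fin n) ∈ litSet p := mem_litSet.2 (by simpa using hi.1)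
      have h2 := Finset.le_sup (f := fun ℓ : Fin n ⊕ Fin n => lit ν g ℓ.swap) hm2
      exact le_trans h1 (by simpa using h2)
    · have hm1 : (Sum.inl i : Fin n ⊕ Fin n) ∈ litSet q := mem_litSet.2 (by simpa using hi.2)
      have h1 : monL ν g q ≤ lit ν g (Sum.inl i) := Finset.inf_le hm1
      have hm2 : (Sum.inr i : Fin n ⊕ Fin n) ∈ litSet p := mem_litSet.2 (by simpa using hi.1)
      have h2 := Finset.le_sup (f := fun ℓ : Fin n ⊕ Fin n => lit ν g ℓ.swap) hm2
      exact le_trans h1 (by simpa using h2)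
  · rw [Finset.inf_sup]
    refine Finset.sup_le fun c hc => ?_
    rw [Finset.mem_pi] at hc
    set q : DCube n := (fun i => decide (∃ p, ∃ h : p ∈ S, c p h = Sum.inr i),
                        fun i => decide (∃ p, ∃ h : p ∈ S, c p h = Sum.inl i)) with hq
    have hq1 : ∀ i, q.1 i = true ↔ (∃ p, ∃ h : p ∈ S, c p h = Sum.inr i) := fun i =>
      decide_eq_true_iff
    have hq2 : ∀ i, q.2 i = true ↔ (∃ p, ∃ h : p ∈ S, c p h = Sum.inl i) := fun i =>
      decide_eq_true_iff
    have hqS : dmNeg f q = true := by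
      rw [dmNeg_apply]
      have : f (sigma q) = false := by
        by_contra hcon
        rw [Bool.not_eq_false] at hcon
        have hmem : sigma q ∈ S := by simp [hS, hcon]
        have hℓ := hc (sigma q) hmem
        rcases hcc : c (sigma q) hmem with i | i
        · rw [hcc] at hℓ
          have h2 : q.2 i = false := by simpa [sigma] using mem_litSet.1 hℓ
          have h3 : q.2 i = true := (hq2 i).2 ⟨sigma q, hmem, hcc⟩
          simp_all
        · rw [hcc] at hℓ
          have h2 : q.1 i = false := by simpa [sigma] using mem_litSet.1 hℓ
          have h3 : q.1 i = true := (hq1 i).2 ⟨sigma q, hmem, hcc⟩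
          simp_all
      rw [this]
      rfl
    have hqmem : q ∈ Finset.univ.filter (fun r : DCube n => dmNeg f r = true) := by
      simp [hqS]
    refine le_trans ?_ (Finset.le_sup (f := monL ν g) hqmem)
    refine Finset.le_inf fun ℓ hℓ => ?_
    rcases ℓ with i | i
    · have h1 : q.1 i = true := by simpa using mem_litSet.1 hℓ
      have hex : ∃ p, ∃ h : p ∈ S, c p h = Sum.inr i := (hq1 i).1 h1
      obtain ⟨p, hp, hcp⟩ := hex
      have h2 := Finset.inf_le (f := fun r : {x // x ∈ S} => lit ν g (Sum.swap (c r.1 r.2)))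
        (Finset.mem_attach S ⟨p, hp⟩)
      simpa [hcp, lit] using h2
    · have h1 : q.2 i = true := by simpa using mem_litSet.1 hℓ
      have hex : ∃ p, ∃ h : p ∈ S, c p h = Sum.inl i := (hq2 i).1 h1
      obtain ⟨p, hp, hcp⟩ := hex
      have h2 := Finset.inf_le (f := fun r : {x // x ∈ S} => lit ν g (Sum.swap (c r.1 r.2)))
        (Finset.mem_attach S ⟨p, hp⟩)
      simpa [hcp, lit] using h2

lemma hom_eq_hFun (h' : BoundedLatticeHom (DM n) L)
    (hdm : ∀ f : DM n, h' (dmNeg f) = ν (h' f))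
    (hgen : ∀ i : Fin n, h' (eGen i) = g i) (f : DM n) : h' f = hFun ν g f := by
  classical
  rw [hFun]
  conv_lhs => rw [dnf f]
  rw [map_finset_sup]
  refine Finset.sup_congr rfl fun p _ => ?_
  show h' (monDM p) = monL ν g p
  rw [monDM, map_finset_inf, monL]
  refine Finset.inf_congr rfl fun ℓ _ => ?_
  rcases ℓ with i | i
  · simpa [litDM, lit] using hgen i
  · have h3 : h' (eGen' i) = ν (g i) := by rw [← dmNeg_eGen, hdm, hgen]
    simpa [litDM, lit] using h3

end Hom


/-- The De Morgan algebra of monotone Boolean functions in doubled variables is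
free on `n` generators: `∼` is a well-defined involutive antitone map on `M`,
`∼(e i) = (x, y) ↦ y i`, and every assignment of the generators to a bounded
distributive lattice `L` with antitone involution `ν` extends to a unique
bounded lattice homomorphism commuting with the involutions. -/
theorem deMorgan_monotone_functions_free (n : ℕ) :
    (∀ f : DM n, Monotone
      (fun p : DCube n => !(f (fun i => !(p.2 i), fun i => !(p.1 i))))) ∧
    (∀ f : DM n, dmNeg (dmNeg f) = f) ∧
    (∀ f g : DM n, f ≤ g → dmNeg g ≤ dmNeg f) ∧
    (∀ i : Fin n, dmNeg (eGen i) = eGen' i) ∧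
    (∀ (L : Type*) [DistribLattice L] [BoundedOrder L] (ν : L → L),
      Antitone ν → ν ∘ ν = id →
      ∀ g : Fin n → L, ∃! h : BoundedLatticeHom (DM n) L,
        (∀ f : DM n, h (dmNeg f) = ν (h f)) ∧ (∀ i : Fin n, h (eGen i) = g i)) := by
  refine ⟨fun f => (dmNeg f).monotone, ?_, ?_, dmNeg_eGen, ?_⟩
  · intro f
    ext p
    simp [dmNeg_apply, sigma]
  · intro f g hfg p
    have hnot : ∀ a b : Bool, a ≤ b → (!b) ≤ (!a) := by decide
    exact hnot _ _ (hfg _)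
  · intro L _ _ ν hν hνν g
    classical
    refine ⟨{ toFun := hFun ν g, map_sup' := hFun_sup ν g, map_inf' := hFun_inf ν g,
              map_top' := hFun_top ν g, map_bot' := hFun_bot ν g }, ⟨?_, ?_⟩, ?_⟩
    · intro f
      exact hFun_dmNeg ν g hν hνν f
    · intro i
      exact hFun_eGen ν g i
    · rintro h' ⟨h1, h2⟩
      refine DFunLike.ext _ _ fun f => ?_
      exact hom_eq_hFun ν g h' h1 h2 f

end Stmt5
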